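/- Let (𝓕_k)_{k≥0} be a filtration on a probability space, and let (Y_k), (Z_k), (W_k) be sequences of nonnegative integrable random variables such that for each k: Y_k, Z_k and W_k are 𝓕_k-measurable, E[Y_{k+1} | 𝓕_k] ≤ Y_k − Z_k + W_k almost surely, and ∑_{k=0}^{∞} W_k < ∞ almost surely. Then almost surely ∑_{k=0}^{∞} Z_k < ∞ and the sequence (Y_k) converges to a (finite) nonnegative random variable. -/

import Mathlib

open MeasureTheory Filter

/-- Lemma 2.5 of Hu et al. 2016, Robbins–Siegmund type: if `(Y_k)`, `(Z_k)`,
`(W_k)` are nonnegative integrable sequences adapted to a filtration `(𝓕_k)` with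
`E[Y_{k+1} | 𝓕 k] ≤ Y_k − Z_k + W_k` a.s. and `∑ W_k < ∞` a.s., then a.s. `∑ Z_k < ∞`
and `(Y_k)` converges to a finite nonnegative limit. -/
theorem almost_supermartingale_convergence {Ω : Type*} {m : MeasurableSpace Ω}
    {μ : Measure Ω} [IsProbabilityMeasure μ]
    (𝓕 : Filtration ℕ m) (Y Z W : ℕ → Ω → ℝ)
    (hYnn : ∀ k, ∀ ω, 0 ≤ Y k ω) (hZnn : ∀ k, ∀ ω, 0 ≤ Z k ω)
    (hWnn : ∀ k, ∀ ω, 0 ≤ W k ω)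
    (hYint : ∀ k, Integrable (Y k) μ) (hZint : ∀ k, Integrable (Z k) μ)
    (hWint : ∀ k, Integrable (W k) μ)
    (hYmeas : ∀ k, StronglyMeasurable[𝓕 k] (Y k))
    (hZmeas : ∀ k, StronglyMeasurable[𝓕 k] (Z k))
    (hWmeas : ∀ k, StronglyMeasurable[𝓕 k] (W k))
    (hcond : ∀ k, μ[Y (k + 1) | 𝓕 k] ≤ᵐ[μ] fun ω => Y k ω - Z k ω + W k ω)
    (hW : ∀ᵐ ω ∂μ, Summable fun k => W k ω) :
    ∀ᵐ ω ∂μ, (Summable fun k => Z k ω) ∧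
      ∃ l : ℝ, 0 ≤ l ∧ Tendsto (fun k => Y k ω) atTop (nhds l) := by
  classical
  set SZ : ℕ → Ω → ℝ := fun k ω => ∑ j ∈ Finset.range k, Z j ω with hSZdef
  set SW : ℕ → Ω → ℝ := fun k ω => ∑ j ∈ Finset.range k, W j ω with hSWdef
  set M : ℕ → Ω → ℝ := fun k ω => Y k ω + SZ k ω - SW k ω with hMdef
  set D : ℕ → Ω → ℝ := fun k ω => M (k + 1) ω - M k ω with hDdef
  -- measurability of partial sums
  have hSZmeas : ∀ k, StronglyMeasurable[𝓕 k] (SZ k) := fun k =>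
    Finset.stronglyMeasurable_fun_sum _ fun j hj =>
      (hZmeas j).mono (𝓕.mono (Finset.mem_range.mp hj).le)
  have hSWmeas : ∀ k, StronglyMeasurable[𝓕 k] (SW k) := fun k =>
    Finset.stronglyMeasurable_fun_sum _ fun j hj =>
      (hWmeas j).mono (𝓕.mono (Finset.mem_range.mp hj).le)
  have hSWmeas' : ∀ k, StronglyMeasurable[𝓕 k] (SW (k + 1)) := fun k =>
    Finset.stronglyMeasurable_fun_sum _ fun j hj =>
      (hWmeas j).mono (𝓕.mono (Nat.lt_succ_iff.mp (Finset.mem_range.mp hj)))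
  have hMmeas : ∀ k, StronglyMeasurable[𝓕 k] (M k) := fun k =>
    ((hYmeas k).add (hSZmeas k)).sub (hSWmeas k)
  have hSZint : ∀ k, Integrable (SZ k) μ := fun k =>
    integrable_finset_sum _ fun j _ => hZint j
  have hSWint : ∀ k, Integrable (SW k) μ := fun k =>
    integrable_finset_sum _ fun j _ => hWint j
  have hMint : ∀ k, Integrable (M k) μ := fun k =>
    ((hYint k).add (hSZint k)).sub (hSWint k)
  have hDint : ∀ k, Integrable (D k) μ := fun k => (hMint (k + 1)).sub (hMint k)
  have hSZnn : ∀ k ω, 0 ≤ SZ k ω := fun k ω =>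
    Finset.sum_nonneg fun j _ => hZnn j ω
  have hSWsucc : ∀ k ω, SW (k + 1) ω = SW k ω + W k ω := fun k ω => by
    simp [hSWdef, Finset.sum_range_succ]
  have hSWmono : ∀ ω, Monotone fun k => SW k ω := fun ω =>
    monotone_nat_of_le_succ fun k => by
      rw [hSWsucc k ω]; exact le_add_of_nonneg_right (hWnn k ω)
  -- key conditional expectation inequality
  have hDcond : ∀ k, μ[D k | 𝓕 k] ≤ᵐ[μ] 0 := by
    intro k
    have hg : Integrable (fun ω => Y k ω - Z k ω + W k ω) μ :=
      ((hYint k).sub (hZint k)).add (hWint k)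
    have hgm : StronglyMeasurable[𝓕 k] (fun ω => Y k ω - Z k ω + W k ω) :=
      ((hYmeas k).sub (hZmeas k)).add (hWmeas k)
    have hDeq : D k = fun ω => Y (k + 1) ω - (Y k ω - Z k ω + W k ω) := by
      funext ω
      simp only [hDdef, hMdef, hSZdef, hSWdef, Finset.sum_range_succ]
      ring
    have h1 : μ[D k | 𝓕 k] =ᵐ[μ]
        μ[Y (k + 1) | 𝓕 k] - μ[(fun ω => Y k ω - Z k ω + W k ω) | 𝓕 k] := by
      rw [hDeq]
      exact condExp_sub (hYint (k + 1)) hg _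
    have h2 : μ[(fun ω => Y k ω - Z k ω + W k ω) | 𝓕 k] =
        fun ω => Y k ω - Z k ω + W k ω :=
      condExp_of_stronglyMeasurable (𝓕.le k) hgm hg
    filter_upwards [h1, hcond k] with ω hω1 hω2
    rw [Pi.zero_apply, hω1, Pi.sub_apply, h2]
    exact sub_nonpos.mpr hω2
  -- for each bound a, convergence of the stopped process implies convergence of M
  have key : ∀ a : ℕ, ∀ᵐ ω ∂μ,
      (∀ n, SW n ω ≤ (a : ℝ)) → ∃ c, Tendsto (fun k => M k ω) atTop (nhds c) := by
    intro a
    set A : ℕ → Set Ω := fun k => {x | SW (k + 1) x ≤ (a : ℝ)} with hAdef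
    have hAmeas : ∀ k, MeasurableSet[𝓕 k] (A k) := fun k =>
      measurableSet_le (hSWmeas' k).measurable measurable_const
    set N : ℕ → Ω → ℝ := fun k ω =>
      M 0 ω + ∑ j ∈ Finset.range k, (A j).indicator (D j) ω with hNdef
    have hNsucc : ∀ k ω, N (k + 1) ω = N k ω + (A k).indicator (D k) ω := fun k ω => by
      simp [hNdef, Finset.sum_range_succ, add_assoc]
    have hM0 : ∀ ω, M 0 ω = Y 0 ω := fun ω => by simp [hMdef, hSZdef, hSWdef]
    -- N equals M as long as SW stays below a
    have hNeq : ∀ k ω, SW k ω ≤ (a : ℝ) → N k ω = M k ω := by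
      intro k
      induction k with
      | zero => intro ω _; simp [hNdef]
      | succ k ih =>
        intro ω hle
        have hk : SW k ω ≤ (a : ℝ) := le_trans (hSWmono ω (Nat.le_succ k)) hle
        have hmem : ω ∈ A k := hle
        rw [hNsucc k ω, Set.indicator_of_mem hmem, ih ω hk, hDdef]
        ring
    -- lower bound
    have hNlb : ∀ k ω, -(a : ℝ) ≤ N k ω := by
      intro k
      induction k with
      | zero =>
        intro ω
        have : (0 : ℝ) ≤ N 0 ω := by
          simp only [hNdef, Finset.range_zero, Finset.sum_empty, add_zero]
          rw [hM0 ω]; exact hYnn 0 ω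
        have ha : (0 : ℝ) ≤ (a : ℝ) := Nat.cast_nonneg a
        linarith
      | succ k ih =>
        intro ω
        by_cases hmem : ω ∈ A k
        · have hle : SW (k + 1) ω ≤ (a : ℝ) := hmem
          have := hNeq (k + 1) ω hle
          rw [this, hMdef]
          have h1 := hYnn (k + 1) ω
          have h2 := hSZnn (k + 1) ω
          simp only
          linarith
        · rw [hNsucc k ω, Set.indicator_of_notMem hmem, add_zero]
          exact ih ω
    -- N is a supermartingale
    have hNadp : StronglyAdapted 𝓕 N := by
      intro k
      refine ((hMmeas 0).mono (𝓕.mono (Nat.zero_le k))).add ?_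
      refine Finset.stronglyMeasurable_fun_sum _ fun j hj => ?_
      have hjk : j + 1 ≤ k := Finset.mem_range.mp hj
      exact StronglyMeasurable.indicator
        (((hMmeas (j + 1)).mono (𝓕.mono hjk)).sub
          ((hMmeas j).mono (𝓕.mono (le_trans (Nat.le_succ j) hjk))))
        (𝓕.mono (Nat.le_of_succ_le hjk) _ (hAmeas j))
    have hNint : ∀ k, Integrable (N k) μ := by
      intro k
      refine (hMint 0).add (integrable_finset_sum _ fun j _ => ?_)
      exact (hDint j).indicator (𝓕.le j _ (hAmeas j))
    have hNstep : ∀ k, μ[N (k + 1) | 𝓕 k] ≤ᵐ[μ] N k := by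
      intro k
      have hNind : Integrable ((A k).indicator (D k)) μ :=
        (hDint k).indicator (𝓕.le k _ (hAmeas k))
      have heq : N (k + 1) = N k + (A k).indicator (D k) := funext fun ω => hNsucc k ω
      have h1 : μ[N (k + 1) | 𝓕 k] =ᵐ[μ]
          μ[N k | 𝓕 k] + μ[(A k).indicator (D k) | 𝓕 k] := by
        rw [heq]; exact condExp_add (hNint k) hNind _
      have h2 : μ[N k | 𝓕 k] = N k :=
        condExp_of_stronglyMeasurable (𝓕.le k) (hNadp k) (hNint k)
      have hAk : MeasurableSet[𝓕 k] (A k) := hAmeas k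
      have h3 : μ[(A k).indicator (D k) | 𝓕 k] =ᵐ[μ] (A k).indicator (μ[D k | 𝓕 k]) :=
        condExp_indicator (hDint k) hAk
      filter_upwards [h1, h3, hDcond k] with ω hω1 hω3 hωD
      rw [hω1, Pi.add_apply, h2, hω3]
      have : (A k).indicator (μ[D k | 𝓕 k]) ω ≤ 0 := by
        by_cases hmem : ω ∈ A k
        · rw [Set.indicator_of_mem hmem]; exact hωD
        · rw [Set.indicator_of_notMem hmem]
      linarith
    have hNsup : Supermartingale N 𝓕 μ := supermartingale_nat hNadp hNint hNstep
    -- L¹ bound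
    have hIbound : ∀ n, ∫ ω, ‖N n ω‖ ∂μ ≤ ∫ ω, Y 0 ω ∂μ + 2 * a := by
      intro n
      have hptw : ∀ ω, ‖N n ω‖ ≤ N n ω + 2 * a := by
        intro ω
        have h1 := hNlb n ω
        rw [Real.norm_eq_abs]
        rcases abs_cases (N n ω) with ⟨h, _⟩ | ⟨h, _⟩ <;> rw [h]
        · have : (0:ℝ) ≤ (a:ℝ) := Nat.cast_nonneg a
          linarith
        · linarith
      have hint2 : Integrable (fun ω => N n ω + 2 * a) μ :=
        (hNint n).add (integrable_const _)
      have h1 : ∫ ω, ‖N n ω‖ ∂μ ≤ ∫ ω, (N n ω + 2 * a) ∂μ :=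
        integral_mono (hNint n).norm hint2 hptw
      have h2 : ∫ ω, (N n ω + 2 * a) ∂μ = ∫ ω, N n ω ∂μ + 2 * a := by
        rw [integral_add (hNint n) (integrable_const _), integral_const]
        simp
      have h3 : ∫ ω, N n ω ∂μ ≤ ∫ ω, N 0 ω ∂μ := by
        have hcn : μ[N n | 𝓕 0] ≤ᵐ[μ] N 0 := hNsup.2.1 0 n (Nat.zero_le n)
        have := integral_mono_ae integrable_condExp (hNint 0) hcn
        rwa [integral_condExp (𝓕.le 0)] at this
      have h4 : ∫ ω, N 0 ω ∂μ = ∫ ω, Y 0 ω ∂μ := by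
        refine integral_congr_ae (Filter.Eventually.of_forall fun ω => ?_)
        simp only [hNdef, Finset.range_zero, Finset.sum_empty, add_zero]
        exact hM0 ω
      linarith
    set R : NNReal := (∫ ω, Y 0 ω ∂μ + 2 * a).toNNReal with hRdef
    have hbdd : ∀ n, eLpNorm (-N n) 1 μ ≤ (R : ENNReal) := by
      intro n
      rw [eLpNorm_neg, eLpNorm_one_eq_lintegral_enorm,
        ← ofReal_integral_norm_eq_lintegral_enorm (hNint n)]
      have : (R : ENNReal) = ENNReal.ofReal (∫ ω, Y 0 ω ∂μ + 2 * a) := rfl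
      rw [this]
      exact ENNReal.ofReal_le_ofReal (hIbound n)
    have hconv := hNsup.neg.exists_ae_tendsto_of_bdd hbdd
    filter_upwards [hconv] with ω hc hSWle
    obtain ⟨c, hc⟩ := hc
    refine ⟨-c, ?_⟩
    have : Tendsto (fun n => N n ω) atTop (nhds (-c)) := by
      have := hc.neg
      simpa using this
    refine this.congr fun k => hNeq k ω (hSWle k)
  -- combine events
  filter_upwards [hW, ae_all_iff.mpr key] with ω hWsum hkey
  set tW : ℝ := ∑' k, W k ω with htW
  have hSWle : ∀ n, SW n ω ≤ tW := fun n =>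
    Summable.sum_le_tsum _ (fun j _ => hWnn j ω) hWsum
  obtain ⟨c, hc⟩ := hkey ⌈tW⌉₊ fun n => (hSWle n).trans (Nat.le_ceil tW)
  obtain ⟨b, hb⟩ := hc.bddAbove_range
  have hMb : ∀ k, M k ω ≤ b := fun k => hb (Set.mem_range_self k)
  have hZsum : Summable fun k => Z k ω := by
    refine summable_of_sum_range_le (c := b + tW) (fun j => hZnn j ω) fun n => ?_
    have h1 : SZ n ω = M n ω - Y n ω + SW n ω := by simp [hMdef]; ring
    have := hYnn n ω
    have := hMb n
    have := hSWle n
    calc ∑ j ∈ Finset.range n, Z j ω = SZ n ω := rfl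
      _ ≤ b + tW := by rw [h1]; linarith
  refine ⟨hZsum, ?_⟩
  have hTZ : Tendsto (fun k => SZ k ω) atTop (nhds (∑' k, Z k ω)) :=
    hZsum.hasSum.tendsto_sum_nat
  have hTW : Tendsto (fun k => SW k ω) atTop (nhds tW) :=
    hWsum.hasSum.tendsto_sum_nat
  have hYt : Tendsto (fun k => Y k ω) atTop (nhds (c - ∑' k, Z k ω + tW)) := by
    have : ∀ k, Y k ω = M k ω - SZ k ω + SW k ω := fun k => by simp [hMdef]; ring
    exact Tendsto.congr (fun k => (this k).symm) ((hc.sub hTZ).add hTW)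
  exact ⟨_, ge_of_tendsto' hYt fun k => hYnn k ω, hYt⟩
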